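/- Let S be a topological semigroup (a semigroup with a topology making multiplication continuous) whose underlying space is compact, Hausdorff and totally disconnected. Assume S is completely regular, i.e., for every a ∈ S there exists x ∈ S with a * x * a = a, x * a * x = x and a * x = x * a. If S is topologically finitely generated, i.e., there is a finite subset F ⊆ S such that the topological closure of the subsemigroup generated by F is all of S, and S is countable, then S is finite. -/

import Mathlib

open Filter Topology Set

namespace CFP


variable {S : Type*} [Semigroup S]

/-- `pw a n = a^(n+1)` -/
def pw (a : S) : ℕ → S
  | 0 => a
  | n+1 => pw a n * a

lemma pw_succ (a : S) (n : ℕ) : pw a (n+1) = pw a n * a := rfl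

lemma pw_add (a : S) (m n : ℕ) : pw a (m + n + 1) = pw a m * pw a n := by
  induction n with
  | zero => rfl
  | succ k ih =>
      have : m + (k+1) + 1 = (m + k + 1) + 1 := by ring
      rw [this, pw_succ, ih, pw_succ, mul_assoc]

lemma pw_shift {a : S} {n : ℕ} (h : pw a n = a) : ∀ k, pw a (k + n) = pw a k := by
  intro k
  induction k with
  | zero => rw [Nat.zero_add]; exact h
  | succ k ih =>
      have : k + 1 + n = (k + n) + 1 := by ring
      rw [this, pw_succ, ih, pw_succ]

lemma pw_mem {T : Subsemigroup S} {a : S} (ha : a ∈ T) (n : ℕ) : pw a n ∈ T := by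
  induction n with
  | zero => exact ha
  | succ k ih => exact T.mul_mem ih ha

lemma pw_mem_set {K : Set S} (hmul : ∀ s ∈ K, ∀ t ∈ K, s * t ∈ K) {a : S} (ha : a ∈ K)
    (n : ℕ) : pw a n ∈ K := by
  induction n with
  | zero => exact ha
  | succ k ih => exact hmul _ ih _ ha

lemma pw_left (a : S) (m : ℕ) : a * pw a m = pw a (m + 1) := by
  have h := pw_add a 0 m
  have h0 : (0 : ℕ) + m + 1 = m + 1 := by ring
  rw [h0] at h
  exact h.symm


section Topological

variable [TopologicalSpace S] [ContinuousMul S] [T2Space S]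




lemma group_set_finite (hcount : Countable S)
    (K : Set S) (e : S) (hK : IsCompact K)
    (hmul : ∀ s ∈ K, ∀ t ∈ K, s * t ∈ K)
    (hid : ∀ s ∈ K, e * s = s ∧ s * e = s)
    (hinv : ∀ s ∈ K, ∃ t, t ∈ K ∧ s * t = e ∧ t * s = e) : K.Finite := by
  rcases K.eq_empty_or_nonempty with rfl | hne
  · exact finite_empty
  haveI : CompactSpace ↥K := isCompact_iff_compactSpace.mp hK
  haveI : Nonempty ↥K := hne.to_subtype
  -- choose inverses
  have hinv' : ∀ s : ↥K, ∃ t, t ∈ K ∧ (s : S) * t = e ∧ t * (s : S) = e := fun s => hinv s s.2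
  choose inv hinvK hinv1 hinv2 using hinv'
  -- Baire: some singleton of the subtype has nonempty interior
  obtain ⟨k₀, hk₀⟩ : ∃ k₀ : ↥K, (interior {k₀}).Nonempty := by
    apply nonempty_interior_of_iUnion_of_closed (f := fun k : ↥K => ({k} : Set ↥K))
    · intro k; exact isClosed_singleton
    · ext p; simp
  have hopen : IsOpen ({k₀} : Set ↥K) := by
    rcases hk₀ with ⟨p, hp⟩
    have hpk : p = k₀ := by
      have := interior_subset hp
      simpa using this
    have h2 : interior ({k₀} : Set ↥K) = {k₀} := by
      apply Subset.antisymm interior_subset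
      intro q hq
      simp only [mem_singleton_iff] at hq
      subst hq
      rw [← hpk] at hp ⊢
      exact hp
    rw [← h2]
    exact isOpen_interior
  -- ambient open set U with U ∩ K = {k₀}
  obtain ⟨U, hU, hUK⟩ : ∃ U : Set S, IsOpen U ∧ Subtype.val ⁻¹' U = ({k₀} : Set ↥K) := by
    rcases isOpen_induced_iff.mp hopen with ⟨U, hU, h⟩
    exact ⟨U, hU, h⟩
  have hUmem : ∀ s : S, s ∈ K → (s ∈ U ↔ s = (k₀ : S)) := by
    intro s hs
    constructor
    · intro hsU
      have : (⟨s, hs⟩ : ↥K) ∈ Subtype.val ⁻¹' U := hsU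
      rw [hUK] at this
      exact congrArg Subtype.val this
    · rintro rfl
      have : k₀ ∈ Subtype.val ⁻¹' U := by rw [hUK]; rfl
      exact this
  -- the open sets V k
  set V : ↥K → Set S := fun k => (fun s => ((k₀ : S) * inv k) * s) ⁻¹' U with hV
  have hVopen : ∀ k, IsOpen (V k) := fun k => (hU.preimage (by continuity))
  have hVk : ∀ k : ↥K, (k : S) ∈ V k := by
    intro k
    show ((k₀ : S) * inv k) * (k : S) ∈ U
    rw [mul_assoc, hinv2 k, (hid _ k₀.2).2]
    rw [hUmem _ k₀.2]
  have hVcap : ∀ (k : ↥K) (s : S), s ∈ V k → s ∈ K → s = (k : S) := by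
    intro k s hsV hsK
    have hc : ((k₀ : S) * inv k) ∈ K := hmul _ k₀.2 _ (hinvK k)
    have hcs : ((k₀ : S) * inv k) * s ∈ K := hmul _ hc _ hsK
    have : ((k₀ : S) * inv k) * s = (k₀ : S) := (hUmem _ hcs).mp hsV
    -- multiply by (k * inv k₀) on the left
    have key : ((k : S) * inv k₀) * (((k₀ : S) * inv k) * s) = s := by
      have h1 : ((k : S) * inv k₀) * (((k₀ : S) * inv k) * s)
          = ((k : S) * ((inv k₀ * (k₀ : S)) * inv k)) * s := by
        simp only [mul_assoc]
      rw [h1, hinv2 k₀, (hid _ (hinvK k)).1, hinv1 k, (hid _ hsK).1]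
    rw [this] at key
    rw [← key, mul_assoc, hinv2 k₀, (hid _ k.2).2]
  -- finite subcover
  obtain ⟨t, ht⟩ := hK.elim_finite_subcover V hVopen (by
    intro s hs
    exact mem_iUnion.mpr ⟨⟨s, hs⟩, hVk ⟨s, hs⟩⟩)
  have hfin : ((fun k : ↥K => (k : S)) '' ↑t).Finite := Set.Finite.image _ t.finite_toSet
  apply Set.Finite.subset hfin
  intro s hs
  rcases mem_iUnion₂.mp (ht hs) with ⟨k, hkt, hsV⟩
  exact ⟨k, hkt, (hVcap k s hsV hs).symm⟩


end Topological
/-- `rel T u v` : `u` is in the ideal generated by `v` (with two-sided padding in `T`). -/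
def rel (T : Subsemigroup S) (u v : S) : Prop := ∃ p ∈ T, ∃ q ∈ T, p * v * q = u

section RelLemmas

variable {T : Subsemigroup S} (hstar : ∀ a : S, ∃ m : ℕ, pw a (m+1) = a)

lemma rel_trans {a b c : S} (h1 : rel T a b) (h2 : rel T b c) : rel T a c := by
  obtain ⟨p, hp, q, hq, h1⟩ := h1
  obtain ⟨r, hr, w, hw, h2⟩ := h2
  refine ⟨p * r, T.mul_mem hp hr, w * q, T.mul_mem hw hq, ?_⟩
  calc p * r * c * (w * q) = p * (r * c * w) * q := by simp only [mul_assoc]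
    _ = p * b * q := by rw [h2]
    _ = a := h1

lemma pw_conj (a b : S) : ∀ k, pw (a*b) (k+1) = a * pw (b*a) k * b := by
  intro k
  induction k with
  | zero =>
      show (a*b) * (a*b) = a * (b*a) * b
      simp only [mul_assoc]
  | succ k ih =>
      rw [pw_succ, ih, pw_succ]
      simp only [mul_assoc]

include hstar

lemma rel_refl {a : S} (ha : a ∈ T) : rel T a a := by
  obtain ⟨m, hm⟩ := hstar a
  refine ⟨pw a m, pw_mem ha m, pw a m, pw_mem ha m, ?_⟩
  have h1 : pw a m * a = a := by rw [← pw_succ]; exact hm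
  have h2 : a * pw a m = a := by rw [pw_left]; exact hm
  rw [h1, h2]

lemma rel_mul_right {u d : S} (hu : u ∈ T) (hud : u * d ∈ T) : rel T (u * d) d := by
  obtain ⟨m, hm⟩ := hstar (u * d)
  refine ⟨pw (u*d) m * u, T.mul_mem (pw_mem hud m) hu, pw (u*d) m, pw_mem hud m, ?_⟩
  have h1 : pw (u*d) m * (u * d) = u * d := by rw [← pw_succ]; exact hm
  have h2 : (u*d) * pw (u*d) m = u * d := by rw [pw_left]; exact hm
  calc pw (u*d) m * u * d * pw (u*d) m = (pw (u*d) m * (u * d)) * pw (u*d) m := by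
        simp only [mul_assoc]
    _ = (u*d) * pw (u*d) m := by rw [h1]
    _ = u * d := h2

lemma rel_mul_left {u d : S} (hu : u ∈ T) (hdu : d * u ∈ T) : rel T (d * u) d := by
  obtain ⟨m, hm⟩ := hstar (d * u)
  refine ⟨pw (d*u) m, pw_mem hdu m, u * pw (d*u) m, T.mul_mem hu (pw_mem hdu m), ?_⟩
  have h1 : pw (d*u) m * (d * u) = d * u := by rw [← pw_succ]; exact hm
  have h2 : (d*u) * pw (d*u) m = d * u := by rw [pw_left]; exact hm
  calc pw (d*u) m * d * (u * pw (d*u) m) = (pw (d*u) m * (d * u)) * pw (d*u) m := by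
        simp only [mul_assoc]
    _ = (d*u) * pw (d*u) m := by rw [h1]
    _ = d * u := h2

lemma rel_cyc {a b : S} (ha : a ∈ T) (hb : b ∈ T) : rel T (a * b) (b * a) := by
  obtain ⟨m, hm⟩ := hstar (a * b)
  cases m with
  | zero =>
      refine ⟨a, ha, b, hb, ?_⟩
      exact ((pw_conj a b 0).symm).trans hm
  | succ m' =>
      refine ⟨a, ha, pw (b*a) m' * b, T.mul_mem (pw_mem (T.mul_mem hb ha) m') hb, ?_⟩
      have h1 : pw (a*b) (m'+1+1) = a * pw (b*a) (m'+1) * b := pw_conj a b (m'+1)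
      have h2 : pw (b*a) (m'+1) = (b*a) * pw (b*a) m' := (pw_left (b*a) m').symm
      calc a * (b * a) * (pw (b*a) m' * b) = a * ((b*a) * pw (b*a) m') * b := by
            simp only [mul_assoc]
        _ = a * pw (b*a) (m'+1) * b := by rw [← h2]
        _ = pw (a*b) (m'+1+1) := h1.symm
        _ = a * b := hm

lemma rel_sq {a : S} (ha : a ∈ T) : rel T a (a * a) := by
  obtain ⟨m, hm⟩ := hstar a
  refine ⟨pw a m, pw_mem ha m, pw a (2*m), pw_mem ha (2*m), ?_⟩
  have haa : a * a = pw a 1 := rfl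
  have h1 : pw a m * pw a 1 = pw a (m + 1 + 1) := (pw_add a m 1).symm
  have h2 : pw a (m+1+1) * pw a (2*m) = pw a ((m+1+1) + (2*m) + 1) := (pw_add a _ _).symm
  have h3 : (m+1+1) + (2*m) + 1 = (((0 + (m+1)) + (m+1)) + (m+1)) := by ring
  calc pw a m * (a * a) * pw a (2*m) = pw a m * pw a 1 * pw a (2*m) := by rw [haa]
    _ = pw a (m+1+1) * pw a (2*m) := by rw [h1]
    _ = pw a ((m+1+1) + (2*m) + 1) := h2
    _ = pw a (((0 + (m+1)) + (m+1)) + (m+1)) := by rw [h3]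
    _ = a := by rw [pw_shift hm, pw_shift hm, pw_shift hm]; rfl

lemma rel_key {a s b : S} (ha : a ∈ T) (hs : s ∈ T) (hb : b ∈ T) :
    rel T (a * s * b) (a * b) := by
  have h1 : rel T (a * (s * b)) ((s * b) * a) := rel_cyc hstar ha (T.mul_mem hs hb)
  have h2 : rel T (s * (b * a)) (b * a) := rel_mul_right hstar hs (T.mul_mem hs (T.mul_mem hb ha))
  have h3 : rel T (b * a) (a * b) := rel_cyc hstar hb ha
  have e1 : a * s * b = a * (s * b) := by simp only [mul_assoc]
  have e2 : (s * b) * a = s * (b * a) := by simp only [mul_assoc]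
  rw [e1]
  refine rel_trans h1 (rel_trans ?_ h3)
  rw [e2]
  exact h2

end RelLemmas

section WordLemmas

variable {G : Set S} (hstar : ∀ a : S, ∃ m : ℕ, pw a (m+1) = a)

lemma foldl_mem {T' : Subsemigroup S} :
    ∀ (l : List S) (s : S), s ∈ T' → (∀ u ∈ l, u ∈ T') → l.foldl (· * ·) s ∈ T' := by
  intro l
  induction l with
  | nil => intro s hs _; exact hs
  | cons u l ih =>
      intro s hs hl
      exact ih (s * u) (T'.mul_mem hs (hl u (List.mem_cons_self))) fun v hv => hl v (List.mem_cons_of_mem _ hv)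

lemma mem_closure_rep {t : S} (ht : t ∈ Subsemigroup.closure G) :
    ∃ (s : S) (l : List S), s ∈ G ∧ (∀ u ∈ l, u ∈ G) ∧ l.foldl (· * ·) s = t := by
  induction ht using Subsemigroup.closure_induction with
  | mem s hs => exact ⟨s, [], hs, by simp, rfl⟩
  | mul p q hp hq ihp ihq =>
      obtain ⟨s1, l1, hs1, hl1, he1⟩ := ihp
      obtain ⟨s2, l2, hs2, hl2, he2⟩ := ihq
      refine ⟨s1, l1 ++ s2 :: l2, hs1, ?_, ?_⟩
      · intro u hu
        rcases List.mem_append.mp hu with h | h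
        · exact hl1 u h
        · rcases List.mem_cons.mp h with rfl | h
          · exact hs2
          · exact hl2 u h
      · rw [List.foldl_append]
        show List.foldl (· * ·) (List.foldl (· * ·) s1 l1 * s2) l2 = p * q
        rw [List.foldl_assoc, he1, he2]

include hstar in
lemma rel_letter {s : S} {l : List S} (hs : s ∈ G) (hl : ∀ u ∈ l, u ∈ G) {g : S}
    (hg : g ∈ s :: l) :
    rel (Subsemigroup.closure G) (l.foldl (· * ·) s) g := by
  set T := Subsemigroup.closure G with hT
  have hsT : s ∈ T := Subsemigroup.subset_closure hs
  have hlT : ∀ u ∈ l, u ∈ T := fun u hu => Subsemigroup.subset_closure (hl u hu)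
  rcases List.mem_cons.mp hg with heq | hgl
  · -- g = s
    rw [heq]
    cases l with
    | nil => exact rel_refl hstar hsT
    | cons u l' =>
        have : List.foldl (· * ·) s (u :: l') = s * List.foldl (· * ·) u l' := by
          show List.foldl (· * ·) (s * u) l' = _
          rw [List.foldl_assoc]
        rw [this]
        exact rel_mul_left hstar
          (foldl_mem l' u (hlT u (List.mem_cons_self)) fun v hv => hlT v (List.mem_cons_of_mem _ hv))
          (T.mul_mem hsT (foldl_mem l' u (hlT u (List.mem_cons_self))
            fun v hv => hlT v (List.mem_cons_of_mem _ hv)))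
  · -- g ∈ l
    obtain ⟨l₁, l₂, rfl⟩ := List.append_of_mem hgl
    have hgT : g ∈ T := Subsemigroup.subset_closure (hl g hgl)
    have hl₁ : ∀ u ∈ l₁, u ∈ T := fun u hu => hlT u (List.mem_append_left _ hu)
    have hl₂ : ∀ u ∈ l₂, u ∈ T := fun u hu => hlT u (List.mem_append_right _ (List.mem_cons_of_mem _ hu))
    have hc : List.foldl (· * ·) s l₁ ∈ T := foldl_mem l₁ s hsT hl₁
    rw [List.foldl_append]
    cases l₂ with
    | nil =>
        show rel T (List.foldl (· * ·) s l₁ * g) g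
        exact rel_mul_right hstar hc (T.mul_mem hc hgT)
    | cons v l₂' =>
        have hvT : v ∈ T := hl₂ v (List.mem_cons_self)
        have hl₂' : ∀ u ∈ l₂', u ∈ T := fun u hu => hl₂ u (List.mem_cons_of_mem _ hu)
        have hw : List.foldl (· * ·) v l₂' ∈ T := foldl_mem l₂' v hvT hl₂'
        have e1 : List.foldl (· * ·) (List.foldl (· * ·) s l₁) (g :: v :: l₂')
            = List.foldl (· * ·) s l₁ * g * List.foldl (· * ·) v l₂' := by
          show List.foldl (· * ·) (List.foldl (· * ·) s l₁ * g) (v :: l₂') = _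
          show List.foldl (· * ·) ((List.foldl (· * ·) s l₁ * g) * v) l₂' = _
          rw [List.foldl_assoc]
        rw [e1]
        exact ⟨List.foldl (· * ·) s l₁, hc, List.foldl (· * ·) v l₂', hw, rfl⟩

include hstar in
lemma rel_word {s : S} {l : List S} (hs : s ∈ G) (hl : ∀ u ∈ l, u ∈ G) :
    ∀ (l' : List S) (s' : S), s' ∈ G → (∀ u ∈ l', u ∈ G) →
      (∀ u ∈ s' :: l', u ∈ s :: l) →
      rel (Subsemigroup.closure G) (l.foldl (· * ·) s) (l'.foldl (· * ·) s') := by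
  set T := Subsemigroup.closure G with hT
  intro l'
  induction l' using List.reverseRecOn with
  | nil =>
      intro s' hs' _ hsub
      exact rel_letter hstar hs hl (hsub s' (List.mem_cons_self))
  | append_singleton l'' g ih =>
      intro s' hs' hl' hsub
      have hg : g ∈ s :: l := hsub g (List.mem_cons_of_mem _ (List.mem_append_right _ (List.mem_cons_self)))
      have hl'' : ∀ u ∈ l'', u ∈ G := fun u hu => hl' u (List.mem_append_left _ hu)
      have hsub'' : ∀ u ∈ s' :: l'', u ∈ s :: l := by
        intro u hu
        rcases List.mem_cons.mp hu with rfl | hu'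
        · exact hsub u (List.mem_cons_self)
        · exact hsub u (List.mem_cons_of_mem _ (List.mem_append_left _ hu'))
      have ihb : rel T (l.foldl (· * ·) s) (l''.foldl (· * ·) s') := ih s' hs' hl'' hsub''
      have hgrel : rel T (l.foldl (· * ·) s) g := rel_letter hstar hs hl hg
      set t := l.foldl (· * ·) s with hdt
      set b := l''.foldl (· * ·) s' with hdb
      have htT : t ∈ T := foldl_mem l s (Subsemigroup.subset_closure hs)
        (fun u hu => Subsemigroup.subset_closure (hl u hu))
      have hbT : b ∈ T := foldl_mem l'' s' (Subsemigroup.subset_closure hs')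
        (fun u hu => Subsemigroup.subset_closure (hl'' u hu))
      have hgT : g ∈ T := Subsemigroup.subset_closure (hl' g (List.mem_append_right _ (List.mem_cons_self)))
      -- t ≼ t * t = (p b q)(r g w) ⇒ t ≼ b (q r) g ≼ b g
      obtain ⟨p, hp, q, hq, hpq⟩ := ihb
      obtain ⟨r, hr, w, hw, hrw⟩ := hgrel
      have hsq : rel T t (t * t) := rel_sq hstar htT
      obtain ⟨α, hα, β, hβ, hαβ⟩ := hsq
      have hmid : rel T t (b * (q * r) * g) := by
        refine ⟨α * p, T.mul_mem hα hp, w * β, T.mul_mem hw hβ, ?_⟩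
        calc α * p * (b * (q*r) * g) * (w * β)
            = α * ((p * b * q) * (r * g * w)) * β := by simp only [mul_assoc]
          _ = α * (t * t) * β := by rw [hpq, hrw]
          _ = t := hαβ
      have hfin : rel T (b * (q * r) * g) (b * g) :=
        rel_key hstar hbT (T.mul_mem hq hr) hgT
      have := rel_trans hmid hfin
      have e : List.foldl (· * ·) s' (l'' ++ [g]) = b * g := by
        rw [List.foldl_append]
        rfl
      rw [e]
      exact this

end WordLemmas

lemma foldl_mem_set {K : Set S} (hmul : ∀ s ∈ K, ∀ t ∈ K, s * t ∈ K) :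
    ∀ (l : List S) (s : S), s ∈ K → (∀ u ∈ l, u ∈ K) → l.foldl (· * ·) s ∈ K := by
  intro l
  induction l with
  | nil => intro s hs _; exact hs
  | cons u l ih =>
      intro s hs hl
      exact ih (s * u) (hmul _ hs _ (hl u (List.mem_cons_self)))
        fun v hv => hl v (List.mem_cons_of_mem _ hv)


section Main

variable [TopologicalSpace S] [ContinuousMul S] [T2Space S] [CompactSpace S]
lemma star (hcount : Countable S)
    (hreg : ∀ a : S, ∃ x : S, a * x * a = a ∧ x * a * x = x ∧ a * x = x * a) :
    ∀ a : S, ∃ m : ℕ, pw a (m+1) = a := by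
  intro a
  obtain ⟨x, hax, hxax, hcomm⟩ := hreg a
  set G := Subsemigroup.closure ({a, x} : Set S) with hG
  have haG : a ∈ G := Subsemigroup.subset_closure (by simp)
  have hxG : x ∈ G := Subsemigroup.subset_closure (by simp)
  have heA : (a * x) * a = a := hax
  have heX : (a * x) * x = x := by
    rw [hcomm]; exact hxax
  have haE : a * (a * x) = a := by
    rw [hcomm, ← mul_assoc]; exact hax
  have hxE : x * (a * x) = x := by
    rw [← mul_assoc]; exact hxax
  have hidG : ∀ s ∈ G, (a * x) * s = s ∧ s * (a * x) = s := by
    intro s hs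
    induction hs using Subsemigroup.closure_induction with
    | mem s hsmem =>
        rcases hsmem with rfl | rfl
        · exact ⟨heA, haE⟩
        · exact ⟨heX, hxE⟩
    | mul p q hp hq ihp ihq =>
        constructor
        · rw [← mul_assoc, ihp.1]
        · rw [mul_assoc, ihq.2]
  have hinvG : ∀ s ∈ G, ∃ t, t ∈ G ∧ s * t = a * x ∧ t * s = a * x := by
    intro s hs
    induction hs using Subsemigroup.closure_induction with
    | mem s hsmem =>
        rcases hsmem with rfl | rfl
        · exact ⟨x, hxG, rfl, hcomm.symm⟩
        · exact ⟨a, haG, hcomm.symm, rfl⟩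
    | mul p q hp hq ihp ihq =>
        obtain ⟨tp, htpG, htp1, htp2⟩ := ihp
        obtain ⟨tq, htqG, htq1, htq2⟩ := ihq
        refine ⟨tq * tp, G.mul_mem htqG htpG, ?_, ?_⟩
        · have : p * q * (tq * tp) = p * ((q * tq) * tp) := by
            simp only [mul_assoc]
          rw [this, htq1, (hidG tp htpG).1, htp1]
        · have : tq * tp * (p * q) = tq * ((tp * p) * q) := by
            simp only [mul_assoc]
          rw [this, htp2, (hidG q hq).1, htq2]
  -- pass to the closure
  set K := (closure (G : Set S)) with hK
  have hKcl : IsClosed K := isClosed_closure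
  have hKcomp : IsCompact K := hKcl.isCompact
  have hGK : (G : Set S) ⊆ K := subset_closure
  have hmulK : ∀ s ∈ K, ∀ t ∈ K, s * t ∈ K := by
    intro s hs t ht
    have : s * t ∈ G.topologicalClosure := G.topologicalClosure.mul_mem hs ht
    exact this
  have hidK : ∀ s ∈ K, (a * x) * s = s ∧ s * (a * x) = s := by
    intro s hs
    constructor
    · have hcl : IsClosed {s : S | (a * x) * s = s} :=
        isClosed_eq (continuous_const.mul continuous_id) continuous_id
      exact closure_minimal (fun u hu => (hidG u hu).1) hcl hs
    · have hcl : IsClosed {s : S | s * (a * x) = s} :=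
        isClosed_eq (continuous_id.mul continuous_const) continuous_id
      exact closure_minimal (fun u hu => (hidG u hu).2) hcl hs
  have hinvK : ∀ s ∈ K, ∃ t, t ∈ K ∧ s * t = a * x ∧ t * s = a * x := by
    have hZ : IsClosed {p : S × S | p.1 ∈ K ∧ p.2 ∈ K ∧ p.1 * p.2 = a * x ∧ p.2 * p.1 = a * x} := by
      refine IsClosed.inter (hKcl.preimage continuous_fst) ?_
      refine IsClosed.inter (hKcl.preimage continuous_snd) ?_
      refine IsClosed.inter ?_ ?_
      · exact isClosed_eq (continuous_fst.mul continuous_snd) continuous_const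
      · exact isClosed_eq (continuous_snd.mul continuous_fst) continuous_const
    have hZcomp : IsCompact {p : S × S | p.1 ∈ K ∧ p.2 ∈ K ∧ p.1 * p.2 = a * x ∧ p.2 * p.1 = a * x} :=
      hZ.isCompact
    have hA : IsClosed (Prod.fst '' {p : S × S | p.1 ∈ K ∧ p.2 ∈ K ∧ p.1 * p.2 = a * x ∧ p.2 * p.1 = a * x}) :=
      (hZcomp.image continuous_fst).isClosed
    have hGA : (G : Set S) ⊆ Prod.fst '' {p : S × S | p.1 ∈ K ∧ p.2 ∈ K ∧ p.1 * p.2 = a * x ∧ p.2 * p.1 = a * x} := by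
      intro s hs
      obtain ⟨t, htG, ht1, ht2⟩ := hinvG s hs
      exact ⟨(s, t), ⟨hGK hs, hGK htG, ht1, ht2⟩, rfl⟩
    intro s hs
    have := closure_minimal hGA hA hs
    obtain ⟨⟨s', t⟩, ⟨hs'K, htK, h1, h2⟩, hfst⟩ := this
    cases hfst
    exact ⟨t, htK, h1, h2⟩
  have hKfin : K.Finite := group_set_finite hcount K (a * x) hKcomp hmulK hidK hinvK
  -- pigeonhole on powers of a
  have hpwK : ∀ n, pw a n ∈ K := fun n => hGK (pw_mem haG n)
  haveI : Finite ↥K := hKfin.to_subtype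
  obtain ⟨i, j, hij, hpw⟩ :=
    Finite.exists_ne_map_eq_of_infinite (fun n : ℕ => (⟨pw a n, hpwK n⟩ : ↥K))
  have hpw' : pw a i = pw a j := congrArg Subtype.val hpw
  -- the descent lemma
  have hL : ∀ (k m : ℕ), pw a (m + k + 1) * pw x k = pw a m := by
    intro k
    induction k with
    | zero =>
        intro m
        show pw a (m + 1) * x = pw a m
        rw [pw_succ, mul_assoc]
        have := (hidG (pw a m) (pw_mem haG m)).2
        exact this
    | succ k ih =>
        intro m
        have h1 : m + (k+1) + 1 = ((m+1) + k + 1) := by ring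
        rw [h1]
        show pw a ((m+1) + k + 1) * pw x (k+1) = pw a m
        rw [pw_succ (a := x), ← mul_assoc, ih (m+1), pw_succ, mul_assoc]
        exact (hidG (pw a m) (pw_mem haG m)).2
  have main : ∀ i j : ℕ, i < j → pw a i = pw a j → ∃ m : ℕ, pw a (m+1) = a := by
    intro i j hlt heq
    obtain ⟨d, rfl⟩ : ∃ d, j = i + (d + 1) := ⟨j - i - 1, by omega⟩
    cases i with
    | zero =>
        refine ⟨d, ?_⟩
        have : (0 : ℕ) + (d+1) = d + 1 := by ring
        rw [this] at heq
        exact heq.symm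
    | succ i'' =>
        refine ⟨d, ?_⟩
        have h1 : pw a ((d+1) + i'' + 1) * pw x i'' = pw a (d+1) := hL i'' (d+1)
        have h2 : (d+1) + i'' + 1 = i'' + 1 + (d + 1) := by ring
        rw [h2, ← heq] at h1
        have h3 : pw a (0 + i'' + 1) * pw x i'' = pw a 0 := hL i'' 0
        have h4 : (0 : ℕ) + i'' + 1 = i'' + 1 := by ring
        rw [h4] at h3
        rw [h3] at h1
        exact h1.symm
  rcases hij.lt_or_gt with hlt | hlt
  · exact main i j hlt hpw'
  · exact main j i hlt hpw'.symm

lemma simple_compact_finite (hcount : Countable S)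
    (hstar : ∀ a : S, ∃ m : ℕ, pw a (m+1) = a)
    (C : Set S) (hCcomp : IsCompact C) (hCne : C.Nonempty)
    (hCmul : ∀ s ∈ C, ∀ t ∈ C, s * t ∈ C)
    (hsimple : ∀ u ∈ C, ∀ v ∈ C, ∃ p ∈ C, ∃ q ∈ C, p * v * q = u)
    (X : Set S) (hXfin : X.Finite) (hXC : X ⊆ C)
    (hcover : C ⊆ ⋃ x ∈ X, ⋃ y ∈ X, ((x * ·) '' C ∩ (· * y) '' C)) : C.Finite := by
  classical
  -- collections of closed right (resp. left) ideals of C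
  set RI : Set (Set S) :=
    {R | R.Nonempty ∧ IsClosed R ∧ R ⊆ C ∧ ∀ r ∈ R, ∀ c ∈ C, r * c ∈ R} with hRI
  set LI : Set (Set S) :=
    {L | L.Nonempty ∧ IsClosed L ∧ L ⊆ C ∧ ∀ r ∈ L, ∀ c ∈ C, c * r ∈ L} with hLI
  have hchainR : ∀ c ⊆ RI, IsChain (· ⊆ ·) c → c.Nonempty → ∃ lb ∈ RI, ∀ s ∈ c, lb ⊆ s := by
    intro c hcs hc hcne
    refine ⟨⋂₀ c, ⟨?_, isClosed_sInter fun t ht => (hcs ht).2.1, ?_, ?_⟩,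
      fun s hs => Set.sInter_subset_of_mem hs⟩
    · convert IsCompact.nonempty_iInter_of_directed_nonempty_isCompact_isClosed
        (hι := hcne.coe_sort) ((↑) : c → Set S) ?_ ?_ ?_ ?_
      · exact Set.sInter_eq_iInter
      · exact DirectedOn.directed_val (IsChain.directedOn hc.symm)
      · exact fun i => (hcs i.prop).1
      · exact fun i => ((hcs i.prop).2.1).isCompact
      · exact fun i => (hcs i.prop).2.1
    · obtain ⟨t, ht⟩ := hcne
      exact (Set.sInter_subset_of_mem ht).trans (hcs ht).2.2.1
    · intro r hr c' hc'
      rw [Set.mem_sInter] at hr ⊢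
      exact fun t ht => (hcs ht).2.2.2 r (hr t ht) c' hc'
  have hchainL : ∀ c ⊆ LI, IsChain (· ⊆ ·) c → c.Nonempty → ∃ lb ∈ LI, ∀ s ∈ c, lb ⊆ s := by
    intro c hcs hc hcne
    refine ⟨⋂₀ c, ⟨?_, isClosed_sInter fun t ht => (hcs ht).2.1, ?_, ?_⟩,
      fun s hs => Set.sInter_subset_of_mem hs⟩
    · convert IsCompact.nonempty_iInter_of_directed_nonempty_isCompact_isClosed
        (hι := hcne.coe_sort) ((↑) : c → Set S) ?_ ?_ ?_ ?_
      · exact Set.sInter_eq_iInter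
      · exact DirectedOn.directed_val (IsChain.directedOn hc.symm)
      · exact fun i => (hcs i.prop).1
      · exact fun i => ((hcs i.prop).2.1).isCompact
      · exact fun i => (hcs i.prop).2.1
    · obtain ⟨t, ht⟩ := hcne
      exact (Set.sInter_subset_of_mem ht).trans (hcs ht).2.2.1
    · intro r hr c' hc'
      rw [Set.mem_sInter] at hr ⊢
      exact fun t ht => (hcs ht).2.2.2 r (hr t ht) c' hc'
  have hCRI : C ∈ RI := ⟨hCne, hCcomp.isClosed, subset_rfl, hCmul⟩
  have hCLI : C ∈ LI := ⟨hCne, hCcomp.isClosed, subset_rfl, fun r hr c hc => hCmul c hc r hr⟩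
  obtain ⟨R₀, -, hR₀min⟩ := zorn_superset_nonempty RI hchainR C hCRI
  obtain ⟨L₀, -, hL₀min⟩ := zorn_superset_nonempty LI hchainL C hCLI
  have hR₀ := hR₀min.prop
  have hL₀ := hL₀min.prop
  -- translates of minimal ideals are minimal
  have hminR : ∀ u ∈ C, Minimal (· ∈ RI) ((u * ·) '' R₀) := by
    intro u hu
    have hmem : ((u * ·) '' R₀) ∈ RI := by
      refine ⟨hR₀.1.image _, ?_, ?_, ?_⟩
      · exact (((hR₀.2.1.isCompact.of_isClosed_subset hR₀.2.1 subset_rfl)).image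
          (continuous_const.mul continuous_id)).isClosed
      · rintro _ ⟨r, hr, rfl⟩
        exact hCmul u hu r (hR₀.2.2.1 hr)
      · rintro _ ⟨r, hr, rfl⟩ c hc
        exact ⟨r * c, hR₀.2.2.2 r hr c hc, (mul_assoc u r c).symm⟩
    refine ⟨hmem, ?_⟩
    intro R' hR' hsub
    -- R'' = R₀ ∩ preimage
    have hR'' : (R₀ ∩ (u * ·) ⁻¹' R') ∈ RI := by
      refine ⟨?_, ?_, ?_, ?_⟩
      · obtain ⟨r', hr'⟩ := hR'.1
        obtain ⟨r, hr, hre⟩ := hsub hr'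
        refine ⟨r, hr, ?_⟩
        show u * r ∈ R'
        replace hre : u * r = r' := hre
        rw [hre]; exact hr'
      · exact hR₀.2.1.inter (hR'.2.1.preimage (continuous_const.mul continuous_id))
      · exact Set.inter_subset_left.trans hR₀.2.2.1
      · rintro r ⟨hr1, hr2⟩ c hc
        refine ⟨hR₀.2.2.2 r hr1 c hc, ?_⟩
        rw [Set.mem_preimage] at hr2 ⊢
        show u * (r * c) ∈ R'
        rw [← mul_assoc]
        exact hR'.2.2.2 _ hr2 c hc
    have heq : R₀ ∩ (u * ·) ⁻¹' R' = R₀ :=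
      hR₀min.eq_of_subset hR'' Set.inter_subset_left
    intro z hz
    obtain ⟨r, hr, rfl⟩ := hz
    have hmem2 : r ∈ R₀ ∩ (u * ·) ⁻¹' R' := by rw [heq]; exact hr
    exact hmem2.2
  have hminL : ∀ u ∈ C, Minimal (· ∈ LI) ((· * u) '' L₀) := by
    intro u hu
    have hmem : ((· * u) '' L₀) ∈ LI := by
      refine ⟨hL₀.1.image _, ?_, ?_, ?_⟩
      · exact ((hL₀.2.1.isCompact).image
          (continuous_id.mul continuous_const)).isClosed
      · rintro _ ⟨r, hr, rfl⟩
        exact hCmul r (hL₀.2.2.1 hr) u hu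
      · rintro _ ⟨r, hr, rfl⟩ c hc
        exact ⟨c * r, hL₀.2.2.2 r hr c hc, mul_assoc c r u⟩
    refine ⟨hmem, ?_⟩
    intro L' hL' hsub
    have hL'' : (L₀ ∩ (· * u) ⁻¹' L') ∈ LI := by
      refine ⟨?_, ?_, ?_, ?_⟩
      · obtain ⟨r', hr'⟩ := hL'.1
        obtain ⟨r, hr, hre⟩ := hsub hr'
        refine ⟨r, hr, ?_⟩
        show r * u ∈ L'
        replace hre : r * u = r' := hre
        rw [hre]; exact hr'
      · exact hL₀.2.1.inter (hL'.2.1.preimage (continuous_id.mul continuous_const))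
      · exact Set.inter_subset_left.trans hL₀.2.2.1
      · rintro r ⟨hr1, hr2⟩ c hc
        refine ⟨hL₀.2.2.2 r hr1 c hc, ?_⟩
        rw [Set.mem_preimage] at hr2 ⊢
        show (c * r) * u ∈ L'
        rw [mul_assoc]
        exact hL'.2.2.2 _ hr2 c hc
    have heq : L₀ ∩ (· * u) ⁻¹' L' = L₀ :=
      hL₀min.eq_of_subset hL'' Set.inter_subset_left
    intro z hz
    obtain ⟨r, hr, rfl⟩ := hz
    have hmem2 : r ∈ L₀ ∩ (· * u) ⁻¹' L' := by rw [heq]; exact hr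
    exact hmem2.2
  -- every z ∈ C : zC is a minimal closed right ideal containing z
  have hzC : ∀ z ∈ C, z ∈ (z * ·) '' C ∧ Minimal (· ∈ RI) ((z * ·) '' C) := by
    intro z hz
    obtain ⟨w, hw⟩ := hR₀.1
    obtain ⟨p, hp, q, hq, hpq⟩ := hsimple z hz w (hR₀.2.2.1 hw)
    -- z = p * w * q ∈ p • R₀
    have hzmem : z ∈ (p * ·) '' R₀ := by
      refine ⟨w * q, hR₀.2.2.2 w hw q hq, ?_⟩
      show p * (w * q) = z
      rw [← mul_assoc]; exact hpq
    have hminp := hminR p hp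
    have hzCRI : ((z * ·) '' C) ∈ RI := by
      refine ⟨hCne.image _, ?_, ?_, ?_⟩
      · exact (hCcomp.image (continuous_const.mul continuous_id)).isClosed
      · rintro _ ⟨c, hc, rfl⟩
        exact hCmul z hz c hc
      · rintro _ ⟨c, hc, rfl⟩ c' hc'
        exact ⟨c * c', hCmul c hc c' hc', (mul_assoc z c c').symm⟩
    have hsub : ((z * ·) '' C) ⊆ ((p * ·) '' R₀) := by
      rintro _ ⟨c, hc, rfl⟩
      obtain ⟨r, hr, hre⟩ := hzmem
      replace hre : p * r = z := hre
      refine ⟨r * c, hR₀.2.2.2 r hr c hc, ?_⟩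
      show p * (r * c) = z * c
      rw [← mul_assoc, hre]
    have hback : ((p * ·) '' R₀) ⊆ ((z * ·) '' C) := hminp.2 hzCRI hsub
    have hzzC : z ∈ (z * ·) '' C := hback hzmem
    constructor
    · exact hzzC
    · refine ⟨hzCRI, ?_⟩
      intro R' hR' hsub'
      -- R' ⊆ zC ⊆ pR₀ minimal so R' minimal-related: pR₀ ⊆ R' hence zC ⊆ pR₀ ⊆ R'
      have h1 : R' ⊆ (p * ·) '' R₀ := hsub'.trans hsub
      have h2 : ((p * ·) '' R₀) ⊆ R' := hminp.2 hR' h1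
      exact hsub.trans h2
  have hCz : ∀ z ∈ C, z ∈ (· * z) '' C ∧ Minimal (· ∈ LI) ((· * z) '' C) := by
    intro z hz
    obtain ⟨w, hw⟩ := hL₀.1
    obtain ⟨p, hp, q, hq, hpq⟩ := hsimple z hz w (hL₀.2.2.1 hw)
    have hzmem : z ∈ (· * q) '' L₀ := by
      refine ⟨p * w, hL₀.2.2.2 w hw p hp, ?_⟩
      show (p * w) * q = z
      exact hpq
    have hminq := hminL q hq
    have hzCLI : ((· * z) '' C) ∈ LI := by
      refine ⟨hCne.image _, ?_, ?_, ?_⟩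
      · exact (hCcomp.image (continuous_id.mul continuous_const)).isClosed
      · rintro _ ⟨c, hc, rfl⟩
        exact hCmul c hc z hz
      · rintro _ ⟨c, hc, rfl⟩ c' hc'
        exact ⟨c' * c, hCmul c' hc' c hc, mul_assoc c' c z⟩
    have hsub : ((· * z) '' C) ⊆ ((· * q) '' L₀) := by
      rintro _ ⟨c, hc, rfl⟩
      obtain ⟨r, hr, hre⟩ := hzmem
      replace hre : r * q = z := hre
      refine ⟨c * r, hL₀.2.2.2 r hr c hc, ?_⟩
      show (c * r) * q = c * z
      rw [mul_assoc, hre]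
    have hback : ((· * q) '' L₀) ⊆ ((· * z) '' C) := hminq.2 hzCLI hsub
    have hzzC : z ∈ (· * z) '' C := hback hzmem
    constructor
    · exact hzzC
    · refine ⟨hzCLI, ?_⟩
      intro L' hL' hsub'
      have h1 : L' ⊆ (· * q) '' L₀ := hsub'.trans hsub
      have h2 : ((· * q) '' L₀) ⊆ L' := hminq.2 hL' h1
      exact hsub.trans h2
  -- each piece xC ∩ Cy is finite
  have hpiece : ∀ x ∈ X, ∀ y ∈ X, (((x * ·) '' C) ∩ ((· * y) '' C)).Finite := by
    intro x hx y hy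
    set D := ((x * ·) '' C) ∩ ((· * y) '' C) with hD
    rcases D.eq_empty_or_nonempty with hDe | ⟨u₀, hu₀⟩
    · rw [hDe]; exact finite_empty
    have hDC : D ⊆ C := by
      rintro d ⟨⟨c, hc, rfl⟩, -⟩
      exact hCmul x (hXC hx) c hc
    have hDmul : ∀ s ∈ D, ∀ t ∈ D, s * t ∈ D := by
      rintro s ⟨⟨c, hc, rfl⟩, -⟩ t ⟨-, ⟨c', hc', rfl⟩⟩
      constructor
      · exact ⟨c * (c' * y), hCmul c hc _ (hCmul c' hc' y (hXC hy)),
          by simp only [mul_assoc]⟩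
      · exact ⟨(x * c) * c', hCmul _ (hCmul x (hXC hx) c hc) c' hc',
          by simp only [mul_assoc]⟩
    -- D = uC ∩ Cu for any u ∈ D
    have hDeq : ∀ u ∈ D, D = ((u * ·) '' C) ∩ ((· * u) '' C) := by
      rintro u hu
      have huC : u ∈ C := hDC hu
      obtain ⟨⟨cu, hcu, hcue⟩, ⟨cu', hcu', hcue'⟩⟩ := hu
      replace hcue : x * cu = u := hcue
      replace hcue' : cu' * y = u := hcue'
      -- uC = xC
      have h1 : ((u * ·) '' C) = ((x * ·) '' C) := by
        apply Set.Subset.antisymm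
        · rintro _ ⟨c, hc, rfl⟩
          exact ⟨cu * c, hCmul cu hcu c hc, by show x * (cu * c) = u * c; rw [← mul_assoc, hcue]⟩
        · -- xC minimal, uC ∈ RI, uC ⊆ xC
          have hsub : ((u * ·) '' C) ⊆ ((x * ·) '' C) := by
            rintro _ ⟨c, hc, rfl⟩
            exact ⟨cu * c, hCmul cu hcu c hc, by show x * (cu * c) = u * c; rw [← mul_assoc, hcue]⟩
          have hminx := (hzC x (hXC hx)).2
          have huCRI : ((u * ·) '' C) ∈ RI := ((hzC u huC).2).prop
          exact hminx.2 huCRI hsub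
      have h2 : ((· * u) '' C) = ((· * y) '' C) := by
        apply Set.Subset.antisymm
        · rintro _ ⟨c, hc, rfl⟩
          exact ⟨c * cu', hCmul c hc cu' hcu', by show (c * cu') * y = c * u; rw [mul_assoc, hcue']⟩
        · have hsub : ((· * u) '' C) ⊆ ((· * y) '' C) := by
            rintro _ ⟨c, hc, rfl⟩
            exact ⟨c * cu', hCmul c hc cu' hcu', by show (c * cu') * y = c * u; rw [mul_assoc, hcue']⟩
          have hminy := (hCz y (hXC hy)).2
          have huCLI : ((· * u) '' C) ∈ LI := ((hCz u huC).2).prop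
          exact hminy.2 huCLI hsub
      rw [hD, h1, h2]
    -- the idempotent
    obtain ⟨m, hm⟩ := hstar u₀
    set e := pw u₀ m with he
    have heD : e ∈ D := pw_mem_set hDmul hu₀ m
    have hee : e * e = e := by
      have h := pw_add u₀ m m
      have h2 : pw u₀ (m + m + 1) = pw u₀ m := by
        have h3 : m + m + 1 = m + (m+1) := by ring
        rw [h3, pw_shift hm]
      rw [← h, h2]
    have hDe : D = ((e * ·) '' C) ∩ ((· * e) '' C) := hDeq e heD
    -- identity
    have hid : ∀ v ∈ D, e * v = v ∧ v * e = v := by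
      intro v hv
      rw [hDe] at hv
      obtain ⟨⟨c, hc, hcv⟩, ⟨c', hc', hcv'⟩⟩ := hv
      replace hcv : e * c = v := hcv
      replace hcv' : c' * e = v := hcv'
      constructor
      · rw [← hcv, ← mul_assoc, hee]
      · rw [← hcv', mul_assoc, hee]
    -- inverses
    have hinv : ∀ v ∈ D, ∃ t, t ∈ D ∧ v * t = e ∧ t * v = e := by
      intro v hv
      have hvC : v ∈ C := hDC hv
      have heD' : e ∈ ((v * ·) '' C) ∩ ((· * v) '' C) := by
        rw [← hDeq v hv]; exact heD
      obtain ⟨⟨c, hc, hce⟩, ⟨c', hc', hce'⟩⟩ := heD'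
      replace hce : v * c = e := hce
      replace hce' : c' * v = e := hce'
      -- w = e * (c * e), w' = (e * c') * e
      set w := e * (c * e) with hw
      have hwD : w ∈ D := by
        rw [hDe]
        constructor
        · exact ⟨c * e, hCmul c hc e (hDC heD), rfl⟩
        · exact ⟨e * c, hCmul e (hDC heD) c hc, by simp only [mul_assoc, hw]⟩
      have hvw : v * w = e := by
        have h1 : v * e = v := (hid v hv).2
        calc v * (e * (c * e)) = (v * e) * (c * e) := by simp only [mul_assoc]
          _ = v * (c * e) := by rw [h1]
          _ = (v * c) * e := by rw [mul_assoc]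
          _ = e * e := by rw [hce]
          _ = e := hee
      set w' := (e * c') * e with hw'
      have hw'v : w' * v = e := by
        have h1 : e * v = v := (hid v hv).1
        calc ((e * c') * e) * v = (e * c') * (e * v) := by simp only [mul_assoc]
          _ = (e * c') * v := by rw [h1]
          _ = e * (c' * v) := by rw [mul_assoc]
          _ = e * e := by rw [hce']
          _ = e := hee
      have h2 : w' * e = w' := by
        calc ((e * c') * e) * e = (e * c') * (e * e) := by simp only [mul_assoc]
          _ = (e * c') * e := by rw [hee]
      have h4 : e * w = w := by
        calc e * (e * (c * e)) = (e * e) * (c * e) := by simp only [mul_assoc]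
          _ = e * (c * e) := by rw [hee]
      have hww' : w = w' := by
        calc w = e * w := h4.symm
          _ = (w' * v) * w := by rw [hw'v]
          _ = w' * (v * w) := by rw [mul_assoc]
          _ = w' * e := by rw [hvw]
          _ = w' := h2
      exact ⟨w, hwD, hvw, by rw [hww']; exact hw'v⟩
    -- D compact
    have hDclosed : IsClosed D := by
      refine IsClosed.inter ?_ ?_
      · exact (hCcomp.image (continuous_const.mul continuous_id)).isClosed
      · exact (hCcomp.image (continuous_id.mul continuous_const)).isClosed
    have hDcomp : IsCompact D := hCcomp.of_isClosed_subset hDclosed hDC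
    exact group_set_finite hcount D e hDcomp hDmul hid hinv
  -- conclude
  have : C ⊆ ⋃ x ∈ X, ⋃ y ∈ X, (((x * ·) '' C) ∩ ((· * y) '' C)) := hcover
  refine Set.Finite.subset ?_ this
  exact hXfin.biUnion fun x hx => hXfin.biUnion fun y hy => hpiece x hx y hy

theorem closure_fg_finite (hcount : Countable S)
    (hstar : ∀ a : S, ∃ m : ℕ, pw a (m+1) = a) :
    ∀ (N : ℕ) (F : Finset S), F.card ≤ N →
      (closure ((Subsemigroup.closure (F : Set S) : Subsemigroup S) : Set S)).Finite := by
  intro N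
  induction N with
  | zero =>
      intro F hF
      have : F = ∅ := Finset.card_eq_zero.mp (Nat.le_zero.mp hF)
      subst this
      rw [Finset.coe_empty, Subsemigroup.closure_empty]
      have : ((⊥ : Subsemigroup S) : Set S) = (∅ : Set S) := Subsemigroup.coe_bot
      rw [this, closure_empty]
      exact finite_empty
  | succ N IH =>
      intro F hF
      classical
      rcases F.eq_empty_or_nonempty with rfl | hFne
      · rw [Finset.coe_empty, Subsemigroup.closure_empty]
        have : ((⊥ : Subsemigroup S) : Set S) = (∅ : Set S) := Subsemigroup.coe_bot
        rw [this, closure_empty]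
        exact finite_empty
      set T := Subsemigroup.closure ((F : Finset S) : Set S) with hT
      set P : Set S := ⋃ f ∈ F, closure ((Subsemigroup.closure (((F.erase f) : Finset S) : Set S) : Subsemigroup S) : Set S) with hP
      have hPfin : P.Finite := by
        refine Set.Finite.biUnion F.finite_toSet fun f hf => ?_
        apply IH
        have := Finset.card_erase_of_mem hf
        omega
      have hPclosed : IsClosed P := hPfin.isClosed
      -- the full-content ideal
      set I : Set S := {t | ∃ (s : S) (l : List S), s ∈ (F : Set S) ∧ (∀ u ∈ l, u ∈ (F : Set S))
        ∧ (∀ f ∈ F, f = s ∨ f ∈ l) ∧ l.foldl (· * ·) s = t} with hI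
      have hIT : I ⊆ (T : Set S) := by
        rintro t ⟨s, l, hs, hl, -, rfl⟩
        exact foldl_mem l s (Subsemigroup.subset_closure hs)
          fun u hu => Subsemigroup.subset_closure (hl u hu)
      have hTPI : (T : Set S) ⊆ P ∪ I := by
        intro t ht
        obtain ⟨s, l, hs, hl, hfold⟩ := mem_closure_rep ht
        by_cases hfull : ∀ f ∈ F, f = s ∨ f ∈ l
        · right; exact ⟨s, l, hs, hl, hfull, hfold⟩
        · left
          push_neg at hfull
          obtain ⟨f, hfF, hfs, hfl⟩ := hfull
          have hsub : t ∈ (Subsemigroup.closure (((F.erase f) : Finset S) : Set S) : Set S) := by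
            rw [← hfold]
            refine foldl_mem l s ?_ ?_
            · exact Subsemigroup.subset_closure (by
                simp only [Finset.coe_erase, Set.mem_diff, Set.mem_singleton_iff]
                exact ⟨hs, fun h => hfs (by rw [h])⟩)
            · intro u hu
              refine Subsemigroup.subset_closure ?_
              simp only [Finset.coe_erase, Set.mem_diff, Set.mem_singleton_iff]
              exact ⟨hl u hu, fun h => hfl (h ▸ hu)⟩
          refine Set.mem_biUnion hfF ?_
          exact subset_closure hsub
      -- I is an ideal of T
      have hImulT : ∀ t ∈ I, ∀ r ∈ (T : Set S), t * r ∈ I := by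
        rintro t ⟨s, l, hs, hl, hfull, rfl⟩ r hr
        obtain ⟨s', l', hs', hl', hfold'⟩ := mem_closure_rep hr
        refine ⟨s, l ++ s' :: l', hs, ?_, ?_, ?_⟩
        · intro u hu
          rcases List.mem_append.mp hu with h | h
          · exact hl u h
          · rcases List.mem_cons.mp h with rfl | h
            · exact hs'
            · exact hl' u h
        · intro f hf
          rcases hfull f hf with h | h
          · exact Or.inl h
          · exact Or.inr (List.mem_append_left _ h)
        · rw [List.foldl_append]
          show List.foldl (· * ·) (List.foldl (· * ·) s l * s') l' = _
          rw [List.foldl_assoc, hfold']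
      have hTmulI : ∀ t ∈ I, ∀ r ∈ (T : Set S), r * t ∈ I := by
        rintro t ⟨s, l, hs, hl, hfull, rfl⟩ r hr
        obtain ⟨s', l', hs', hl', hfold'⟩ := mem_closure_rep hr
        refine ⟨s', l' ++ s :: l, hs', ?_, ?_, ?_⟩
        · intro u hu
          rcases List.mem_append.mp hu with h | h
          · exact hl' u h
          · rcases List.mem_cons.mp h with rfl | h
            · exact hs
            · exact hl u h
        · intro f hf
          rcases hfull f hf with h | h
          · exact Or.inr (List.mem_append_right _ (List.mem_cons.mpr (Or.inl h)))
          · exact Or.inr (List.mem_append_right _ (List.mem_cons_of_mem _ h))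
        · rw [List.foldl_append]
          show List.foldl (· * ·) (List.foldl (· * ·) s' l' * s) l = _
          rw [List.foldl_assoc, hfold']
      have hImul : ∀ s ∈ I, ∀ t ∈ I, s * t ∈ I := fun s hsI t htI =>
        hImulT s hsI t (hIT htI)
      -- generating set X
      set Q : Set S := (F : Set S) ∪ Set.image2 (· * ·) P (F : Set S)
        ∪ Set.image2 (· * ·) (F : Set S) P
        ∪ Set.image2 (· * ·) (Set.image2 (· * ·) P (F : Set S)) P with hQ
      set X : Set S := I ∩ Q with hX
      have hQfin : Q.Finite := by
        refine (((F.finite_toSet.union ?_).union ?_).union ?_)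
        · exact Set.Finite.image2 _ hPfin F.finite_toSet
        · exact Set.Finite.image2 _ F.finite_toSet hPfin
        · exact Set.Finite.image2 _ (Set.Finite.image2 _ hPfin F.finite_toSet) hPfin
      have hXfin : X.Finite := hQfin.inter_of_right I
      have hXI : X ⊆ I := Set.inter_subset_left
      -- the scan lemma
      have hINNER : ∀ (l : List S), (∀ u ∈ l, u ∈ (F : Set S)) → ∀ c : S, c ∈ (T : Set S) →
          (c ∈ (F : Set S) ∨ ∃ p ∈ P, ∃ f ∈ (F : Set S), p * f = c) →
          l.foldl (· * ·) c ∈ I → l.foldl (· * ·) c ∈ Subsemigroup.closure X := by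
        intro l
        induction l with
        | nil =>
            intro _ c hcT hcshape hcI
            refine Subsemigroup.subset_closure ⟨hcI, ?_⟩
            rcases hcshape with h | ⟨p, hp, f, hf, rfl⟩
            · exact Or.inl (Or.inl (Or.inl h))
            · exact Or.inl (Or.inl (Or.inr ⟨p, hp, f, hf, rfl⟩))
        | cons f l' ih =>
            intro hlet c hcT hcshape htI
            have hfF : f ∈ (F : Set S) := hlet f (List.mem_cons_self)
            have hfT : f ∈ (T : Set S) := Subsemigroup.subset_closure hfF
            have hlet' : ∀ u ∈ l', u ∈ (F : Set S) := fun u hu => hlet u (List.mem_cons_of_mem _ hu)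
            by_cases hcI : c ∈ I
            · -- cut the chunk here
              have hcX : c ∈ X := by
                refine ⟨hcI, ?_⟩
                rcases hcshape with h | ⟨p, hp, g, hg, rfl⟩
                · exact Or.inl (Or.inl (Or.inl h))
                · exact Or.inl (Or.inl (Or.inr ⟨p, hp, g, hg, rfl⟩))
              have he : List.foldl (· * ·) c (f :: l') = c * List.foldl (· * ·) f l' := by
                show List.foldl (· * ·) (c * f) l' = _
                rw [List.foldl_assoc]
              set r := List.foldl (· * ·) f l' with hr
              have hrT : r ∈ (T : Set S) := foldl_mem l' f hfT
                fun u hu => Subsemigroup.subset_closure (hlet' u hu)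
              by_cases hrI : r ∈ I
              · have hrX : r ∈ Subsemigroup.closure X :=
                  ih hlet' f hfT (Or.inl hfF) hrI
                rw [he]
                exact (Subsemigroup.closure X).mul_mem (Subsemigroup.subset_closure hcX) hrX
              · have hrP : r ∈ P := by
                  rcases hTPI hrT with h | h
                  · exact h
                  · exact absurd h hrI
                rw [he] at htI ⊢
                refine Subsemigroup.subset_closure ⟨htI, ?_⟩
                rcases hcshape with h | ⟨p, hp, g, hg, rfl⟩
                · exact Or.inl (Or.inr ⟨c, h, r, hrP, rfl⟩)
                · refine Or.inr ⟨p * g, ⟨p, hp, g, hg, rfl⟩, r, hrP, rfl⟩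
            · -- extend the chunk
              have hcP : c ∈ P := by
                rcases hTPI hcT with h | h
                · exact h
                · exact absurd h hcI
              have := ih hlet' (c * f) (T.mul_mem hcT hfT)
                (Or.inr ⟨c, hcP, f, hfF, rfl⟩)
              exact this htI
      have hIX : I ⊆ (Subsemigroup.closure X : Set S) := by
        rintro t ⟨s, l, hs, hl, hfull, rfl⟩
        exact hINNER l hl s (Subsemigroup.subset_closure hs) (Or.inl hs)
          ⟨s, l, hs, hl, hfull, rfl⟩
      have hXIsub : (Subsemigroup.closure X : Set S) ⊆ I := by
        have hle : Subsemigroup.closure X ≤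
            ({ carrier := I, mul_mem' := fun {a b} ha hb => hImul a ha b hb } : Subsemigroup S) :=
          Subsemigroup.closure_le.mpr hXI
        exact fun x hx => hle hx
      -- algebraic simplicity of I
      have hIfull : ∀ u ∈ I, ∀ v ∈ I, ∃ p ∈ (T : Set S), ∃ q ∈ (T : Set S), p * v * q = u := by
        rintro u ⟨s, l, hs, hl, hfull, rfl⟩ v ⟨s', l', hs', hl', hfull', rfl⟩
        have hrel := rel_word hstar hs hl l' s' hs' hl' (by
          intro w hw
          rcases List.mem_cons.mp hw with rfl | hw'
          · rcases hfull w (by exact_mod_cast hs') with h | h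
            · exact List.mem_cons.mpr (Or.inl h)
            · exact List.mem_cons_of_mem _ h
          · rcases hfull w (by exact_mod_cast hl' w hw') with h | h
            · exact List.mem_cons.mpr (Or.inl h)
            · exact List.mem_cons_of_mem _ h)
        obtain ⟨p, hp, q, hq, hpq⟩ := hrel
        exact ⟨p, hp, q, hq, hpq⟩
      have hsimpleI : ∀ u ∈ I, ∀ v ∈ I, ∃ p ∈ I, ∃ q ∈ I, p * v * q = u := by
        intro u huI v hvI
        obtain ⟨p, hp, q, hq, hpq⟩ := hIfull u huI v hvI
        obtain ⟨m, hm⟩ := hstar u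
        have h1 : pw u m * u = u := by rw [← pw_succ]; exact hm
        have h2 : u * pw u m = u := by rw [pw_left]; exact hm
        refine ⟨pw u m * p, hImulT _ (pw_mem_set hImul huI m) p hp,
          q * pw u m, hTmulI _ (pw_mem_set hImul huI m) q hq, ?_⟩
        calc (pw u m * p) * v * (q * pw u m) = pw u m * (p * v * q) * pw u m := by
              simp only [mul_assoc]
          _ = pw u m * u * pw u m := by rw [hpq]
          _ = u * pw u m := by rw [h1]
          _ = u := h2
      -- the closure C of I
      set C : Set S := closure I with hC
      have hCclosed : IsClosed C := isClosed_closure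
      have hCcomp : IsCompact C := hCclosed.isCompact
      have hICsub : I ⊆ C := subset_closure
      have hCne : C.Nonempty := by
        obtain ⟨g, hg⟩ := hFne
        have hl₀ : F.toList ≠ [] := by
          simp only [ne_eq, Finset.toList_eq_nil]
          rintro rfl
          exact absurd hg (Finset.notMem_empty g)
        obtain ⟨s₀, l₀, he⟩ := List.exists_cons_of_ne_nil hl₀
        refine ⟨l₀.foldl (· * ·) s₀, hICsub ⟨s₀, l₀, ?_, ?_, ?_, rfl⟩⟩
        · have : s₀ ∈ F.toList := he ▸ List.mem_cons_self
          exact_mod_cast Finset.mem_toList.mp this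
        · intro u hu
          have : u ∈ F.toList := he ▸ List.mem_cons_of_mem _ hu
          exact_mod_cast Finset.mem_toList.mp this
        · intro f hf
          have : f ∈ F.toList := Finset.mem_toList.mpr hf
          rw [he] at this
          rcases List.mem_cons.mp this with h | h
          · exact Or.inl h
          · exact Or.inr h
      have hCmul : ∀ s ∈ C, ∀ t ∈ C, s * t ∈ C := by
        intro s hsC t htC
        set SubI : Subsemigroup S :=
          { carrier := I, mul_mem' := fun {a b} ha hb => hImul a ha b hb } with hSubI
        have h1 : s ∈ SubI.topologicalClosure := hsC
        have h2 : t ∈ SubI.topologicalClosure := htC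
        exact SubI.topologicalClosure.mul_mem h1 h2
      -- topological simplicity of C
      have hsimpleC : ∀ u ∈ C, ∀ v ∈ C, ∃ p ∈ C, ∃ q ∈ C, p * v * q = u := by
        have stepA : ∀ u ∈ I, ∀ v ∈ C, ∃ p ∈ C, ∃ q ∈ C, p * v * q = u := by
          intro u huI v hvC
          set Z : Set (S × S × S) :=
            {t | t.1 ∈ C ∧ t.2.1 ∈ C ∧ t.2.2 ∈ C ∧ t.1 * t.2.1 * t.2.2 = u} with hZ
          have hZclosed : IsClosed Z := by
            refine IsClosed.inter (hCclosed.preimage continuous_fst) ?_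
            refine IsClosed.inter (hCclosed.preimage (continuous_fst.comp continuous_snd)) ?_
            refine IsClosed.inter (hCclosed.preimage (continuous_snd.comp continuous_snd)) ?_
            exact isClosed_eq
              (((continuous_fst.mul (continuous_fst.comp continuous_snd)).mul
                (continuous_snd.comp continuous_snd))) continuous_const
          have hZcomp : IsCompact Z := hZclosed.isCompact
          have hBclosed : IsClosed ((fun t : S × S × S => t.2.1) '' Z) :=
            (hZcomp.image (continuous_fst.comp continuous_snd)).isClosed
          have hIB : I ⊆ (fun t : S × S × S => t.2.1) '' Z := by
            intro v' hv'
            obtain ⟨p, hpI, q, hqI, hpq⟩ := hsimpleI u huI v' hv'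
            exact ⟨(p, v', q), ⟨hICsub hpI, hICsub hv', hICsub hqI, hpq⟩, rfl⟩
          have hCB : C ⊆ (fun t : S × S × S => t.2.1) '' Z :=
            closure_minimal hIB hBclosed
          obtain ⟨⟨p, v₂, q⟩, ⟨hpC, hv₂C, hqC, hpq⟩, hproj⟩ := hCB hvC
          simp only at hproj
          subst hproj
          exact ⟨p, hpC, q, hqC, hpq⟩
        intro u huC v hvC
        set W : Set S := (fun pq : S × S => pq.1 * v * pq.2) '' (C ×ˢ C) with hW
        have hWclosed : IsClosed W := by
          refine IsCompact.isClosed ?_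
          exact (hCcomp.prod hCcomp).image
            ((continuous_fst.mul continuous_const).mul continuous_snd)
        have hIW : I ⊆ W := by
          intro u' hu'
          obtain ⟨p, hpC, q, hqC, hpq⟩ := stepA u' hu' v hvC
          exact ⟨(p, q), ⟨hpC, hqC⟩, hpq⟩
        have hCW : C ⊆ W := closure_minimal hIW hWclosed
        obtain ⟨⟨p, q⟩, ⟨hpC, hqC⟩, hpq⟩ := hCW huC
        exact ⟨p, hpC, q, hqC, hpq⟩
      -- covering by the corner pieces
      have hcover : C ⊆ ⋃ x ∈ X, ⋃ y ∈ X, ((x * ·) '' C ∩ (· * y) '' C) := by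
        have hXcov : (Subsemigroup.closure X : Set S) ⊆
            ⋃ x ∈ X, ⋃ y ∈ X, ((x * ·) '' C ∩ (· * y) '' C) := by
          intro t ht
          obtain ⟨s, l, hs, hl, hfold⟩ := mem_closure_rep ht
          have hsC : s ∈ C := hICsub (hXI hs)
          have hlC : ∀ u ∈ l, u ∈ I := fun u hu => hXI (hl u hu)
          -- first coordinate
          have hfirst : t ∈ (s * ·) '' C := by
            cases l with
            | nil =>
                obtain ⟨m, hm⟩ := hstar s
                refine ⟨pw s m, hICsub (pw_mem_set hImul (hXI hs) m), ?_⟩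
                show s * pw s m = t
                rw [pw_left, hm, ← hfold]
                rfl
            | cons u l' =>
                have : List.foldl (· * ·) s (u :: l') = s * List.foldl (· * ·) u l' := by
                  show List.foldl (· * ·) (s * u) l' = _
                  rw [List.foldl_assoc]
                refine ⟨List.foldl (· * ·) u l', ?_, ?_⟩
                · refine hICsub (foldl_mem_set hImul l' u (hlC u (List.mem_cons_self))
                    fun w hw => hlC w (List.mem_cons_of_mem _ hw))
                · show s * List.foldl (· * ·) u l' = t
                  rw [← this, hfold]
          -- last coordinate
          rcases List.eq_nil_or_concat l with rfl | ⟨l'', y, rfl⟩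
          · -- t = s
            obtain ⟨m, hm⟩ := hstar s
            have hts : t = s := by rw [← hfold]; rfl
            subst hts
            refine Set.mem_biUnion hs (Set.mem_biUnion hs ⟨hfirst, ?_⟩)
            refine ⟨pw t m, hICsub (pw_mem_set hImul (hXI hs) m), ?_⟩
            show pw t m * t = t
            rw [← pw_succ]
            exact hm
          · have hyX : y ∈ X := hl y (by
              rw [List.concat_eq_append]
              exact List.mem_append_right _ (List.mem_cons_self))
            have hlast : t ∈ (· * y) '' C := by
              refine ⟨List.foldl (· * ·) s l'', ?_, ?_⟩
              · refine hICsub (foldl_mem_set hImul l'' s (hXI hs)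
                  fun w hw => hlC w (by
                    rw [List.concat_eq_append]
                    exact List.mem_append_left _ hw))
              · show List.foldl (· * ·) s l'' * y = t
                rw [← hfold, List.concat_eq_append, List.foldl_append]
                rfl
            exact Set.mem_biUnion hs (Set.mem_biUnion hyX ⟨hfirst, hlast⟩)
        have hUclosed : IsClosed (⋃ x ∈ X, ⋃ y ∈ X, ((x * ·) '' C ∩ (· * y) '' C)) := by
          refine Set.Finite.isClosed_biUnion hXfin fun x hx => ?_
          refine Set.Finite.isClosed_biUnion hXfin fun y hy => ?_
          exact IsClosed.inter (hCcomp.image (continuous_const.mul continuous_id)).isClosed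
            (hCcomp.image (continuous_id.mul continuous_const)).isClosed
        have : I ⊆ ⋃ x ∈ X, ⋃ y ∈ X, ((x * ·) '' C ∩ (· * y) '' C) :=
          fun t ht => hXcov (hIX ht)
        exact closure_minimal this hUclosed
      have hCfin : C.Finite := simple_compact_finite hcount hstar C hCcomp hCne hCmul hsimpleC
        X hXfin (fun x hx => hICsub (hXI hx)) hcover
      -- conclude
      have hfinal : closure ((T : Subsemigroup S) : Set S) ⊆ P ∪ C := by
        refine closure_minimal ?_ (hPclosed.union hCclosed)
        intro t ht
        rcases hTPI ht with h | h
        · exact Or.inl h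
        · exact Or.inr (hICsub h)
      exact (hPfin.union hCfin).subset hfinal


end Main

end CFP

/-- A finitely generated countable profinite completely regular semigroup is finite. -/
theorem countable_fg_profinite_completely_regular_semigroup_finite {S : Type*}
    [Semigroup S] [TopologicalSpace S] [ContinuousMul S]
    [CompactSpace S] [T2Space S] [TotallyDisconnectedSpace S]
    (hreg : ∀ a : S, ∃ x : S, a * x * a = a ∧ x * a * x = x ∧ a * x = x * a)
    (hfg : ∃ F : Finset S,
      closure ((Subsemigroup.closure (F : Set S) : Subsemigroup S) : Set S) = Set.univ)
    (hcount : Countable S) : Finite S := by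
  obtain ⟨F, hF⟩ := hfg
  have hstar := CFP.star hcount hreg
  have hfin := CFP.closure_fg_finite hcount hstar F.card F le_rfl
  rw [hF] at hfin
  exact Set.finite_univ_iff.mp hfin
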